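/- Suppose the dispersion and survival matrices satisfy D S = S. Then the alternative net reproductive number satisfies R̂₀ = max_{i ∈ {1,…,n}} R₀^i, and the newborn submatrix of the next-generation matrix is given entrywise by N̄_{ij} = d_1^{i,j} · R₀^j for all i,j ∈ {1,…,n}, where R₀^j := (N^j)_{11} with N^j := F^j (I − S^j)^{-1}. -/

import Mathlib

open Matrix BigOperators

/-- Spectral radius of a real square matrix: the maximum modulus of its complex
eigenvalues (elements of the spectrum of the matrix viewed over `ℂ`). -/
noncomputable def specRad {ι : Type*} [Fintype ι] [DecidableEq ι]
    (M : Matrix ι ι ℝ) : ℝ :=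
  sSup {r : ℝ | ∃ μ : ℂ, μ ∈ spectrum ℂ (M.map Complex.ofReal) ∧ r = ‖μ‖}

/-- The induced `L¹` operator norm of a real matrix: the maximum absolute column sum. -/
noncomputable def colNorm {ι : Type*} [Fintype ι] (M : Matrix ι ι ℝ) : ℝ :=
  ⨆ q, ∑ p, |M p q|

/-- Local fecundity matrix: first row `(f 0, …, f (m-1))`, other rows zero. -/
def localF (m : ℕ) (f : Fin m → ℝ) : Matrix (Fin m) (Fin m) ℝ :=
  Matrix.of fun k' k => if (k' : ℕ) = 0 then f k else 0

/-- Local survival matrix: diagonal entries `sd k`, subdiagonal entries `ss k`,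
all other entries zero. -/
def localS (m : ℕ) (sd ss : Fin m → ℝ) : Matrix (Fin m) (Fin m) ℝ :=
  Matrix.of fun k' k =>
    if k' = k then sd k else if (k' : ℕ) = (k : ℕ) + 1 then ss k else 0

/-- Global (block-diagonal) fecundity matrix `F = ⊕ᵢ Fⁱ`, indexed by
(stage, patch) pairs. -/
def fecMat (m n : ℕ) (f : Fin m → Fin n → ℝ) :
    Matrix (Fin m × Fin n) (Fin m × Fin n) ℝ :=
  Matrix.of fun p q =>
    if p.2 = q.2 then localF m (fun k => f k q.2) p.1 q.1 else 0

/-- Global (block-diagonal) survival matrix `S = ⊕ᵢ Sⁱ`. -/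
def survMat (m n : ℕ) (sd ss : Fin m → Fin n → ℝ) :
    Matrix (Fin m × Fin n) (Fin m × Fin n) ℝ :=
  Matrix.of fun p q =>
    if p.2 = q.2 then localS m (fun k => sd k q.2) (fun k => ss k q.2) p.1 q.1 else 0

/-- Global dispersion matrix: the `(i,j)` patch block is `diag (d 0 i j, …, d (m-1) i j)`. -/
def dispMat (m n : ℕ) (d : Fin m → Fin n → Fin n → ℝ) :
    Matrix (Fin m × Fin n) (Fin m × Fin n) ℝ :=
  Matrix.of fun p q => if p.1 = q.1 then d q.1 p.2 q.2 else 0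

/-- Next-generation matrix `N = D F (I - D S)⁻¹`. -/
noncomputable def nextGen (m n : ℕ) (f : Fin m → Fin n → ℝ)
    (sd ss : Fin m → Fin n → ℝ) (d : Fin m → Fin n → Fin n → ℝ) :
    Matrix (Fin m × Fin n) (Fin m × Fin n) ℝ :=
  dispMat m n d * fecMat m n f * (1 - dispMat m n d * survMat m n sd ss)⁻¹

/-- Partial next-generation matrix `W = F (I - D S)⁻¹`. -/
noncomputable def partGen (m n : ℕ) (f : Fin m → Fin n → ℝ)
    (sd ss : Fin m → Fin n → ℝ) (d : Fin m → Fin n → Fin n → ℝ) :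
    Matrix (Fin m × Fin n) (Fin m × Fin n) ℝ :=
  fecMat m n f * (1 - dispMat m n d * survMat m n sd ss)⁻¹

/-- Newborn submatrix: keep only the rows and columns with stage index `0`
(the newborn indices). -/
def newbornSub {m n : ℕ} (hm : 0 < m)
    (B : Matrix (Fin m × Fin n) (Fin m × Fin n) ℝ) : Matrix (Fin n) (Fin n) ℝ :=
  Matrix.of fun i j => B (⟨0, hm⟩, i) (⟨0, hm⟩, j)

/-- The alternative net reproductive number `R̂₀ = max_{x ∈ 𝒳} ‖N x‖`, where `𝒳`
is the set of nonnegative `L¹`-unit vectors supported on the newborn indices. -/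
noncomputable def altR0 (m n : ℕ)
    (N : Matrix (Fin m × Fin n) (Fin m × Fin n) ℝ) : ℝ :=
  sSup {r : ℝ | ∃ x : Fin m × Fin n → ℝ, (∀ p, 0 ≤ x p) ∧ (∑ p, |x p|) = 1 ∧
    (∀ p : Fin m × Fin n, (p.1 : ℕ) ≠ 0 → x p = 0) ∧ r = ∑ p, |N.mulVec x p|}


/-! ### Auxiliary machinery -/

lemma aPos (m : ℕ) (sd : Fin m → ℝ) (hsd : ∀ k, sd k < 1) (l : ℕ) :
    0 < (if h : l < m then 1 - sd ⟨l, h⟩ else 1) := by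
  split
  · linarith [hsd ⟨l, by assumption⟩]
  · norm_num

lemma prodA_pos (m : ℕ) (sd : Fin m → ℝ) (hsd : ∀ k, sd k < 1) (s : Finset ℕ) :
    0 < ∏ l ∈ s, (if h : l < m then 1 - sd ⟨l, h⟩ else 1) :=
  Finset.prod_pos fun l _ => aPos m sd hsd l

/-- Explicit inverse of `1 - localS`. -/
noncomputable def Tloc (m : ℕ) (sd ss : Fin m → ℝ) : Matrix (Fin m) (Fin m) ℝ :=
  Matrix.of fun k' k =>
    if (k : ℕ) ≤ (k' : ℕ) then
      (∏ l ∈ Finset.Ico (k : ℕ) (k' : ℕ),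
          (if h : l < m then ss ⟨l, h⟩ else 0)) /
      (∏ l ∈ Finset.Icc (k : ℕ) (k' : ℕ),
          (if h : l < m then 1 - sd ⟨l, h⟩ else 1))
    else 0

lemma Tloc_nonneg (m : ℕ) (sd ss : Fin m → ℝ) (hsd : ∀ k, sd k < 1)
    (hss : ∀ k, 0 ≤ ss k) (k' k : Fin m) :
    0 ≤ Tloc m sd ss k' k := by
  unfold Tloc
  simp only [Matrix.of_apply]
  split
  · apply div_nonneg
    · refine Finset.prod_nonneg fun l _ => ?_
      split
      · exact hss _
      · exact le_rfl
    · exact (prodA_pos m sd hsd _).le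
  · exact le_rfl

lemma Tloc_rightInv (m : ℕ) (sd ss : Fin m → ℝ) (hsd : ∀ k, sd k < 1) :
    (1 - localS m sd ss) * Tloc m sd ss = 1 := by
  ext k' k
  rw [Matrix.mul_apply]
  set A : ℕ → ℝ := fun l => if h : l < m then 1 - sd ⟨l, h⟩ else 1 with hA
  set B : ℕ → ℝ := fun l => if h : l < m then ss ⟨l, h⟩ else 0 with hB
  have hApos : ∀ l, 0 < A l := fun l => aPos m sd hsd l
  have hT : ∀ p q : Fin m, Tloc m sd ss p q =
      if (q : ℕ) ≤ (p : ℕ) then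
        (∏ l ∈ Finset.Ico (q : ℕ) (p : ℕ), B l) /
        (∏ l ∈ Finset.Icc (q : ℕ) (p : ℕ), A l)
      else 0 := fun p q => rfl
  have hT0 : ∀ p q : Fin m, (p : ℕ) < (q : ℕ) → Tloc m sd ss p q = 0 := by
    intro p q h
    rw [hT]
    rw [if_neg (by omega)]
  have hTdiag : ∀ q : Fin m, (1 - sd q) * Tloc m sd ss q q = 1 := by
    intro q
    rw [hT, if_pos le_rfl, Finset.Ico_self, Finset.prod_empty, Finset.Icc_self,
      Finset.prod_singleton]
    have hAq : A (q : ℕ) = 1 - sd q := by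
      rw [hA]
      simp only [q.isLt, dif_pos]
    have hne : 1 - sd q ≠ 0 := sub_ne_zero.mpr (hsd q).ne'
    rw [hAq, mul_one_div]
    exact div_self hne
  have hg : ∀ l : Fin m, (1 - localS m sd ss) k' l * Tloc m sd ss l k
      = (if k' = l then (1 - sd l) * Tloc m sd ss l k else 0)
        + (if (k' : ℕ) = (l : ℕ) + 1 then -(ss l * Tloc m sd ss l k) else 0) := by
    intro l
    simp only [Matrix.sub_apply, Matrix.one_apply, localS, Matrix.of_apply]
    by_cases h1 : k' = l
    · subst h1
      have h2 : ¬((k' : ℕ) = (k' : ℕ) + 1) := by omega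
      simp only [eq_self_iff_true, if_true, if_neg h2]
      ring
    · simp only [if_neg h1]
      by_cases h2 : (k' : ℕ) = (l : ℕ) + 1
      · simp only [if_pos h2]
        ring
      · simp only [if_neg h2]
        ring
  rw [Finset.sum_congr rfl (fun l _ => hg l), Finset.sum_add_distrib,
    Finset.sum_ite_eq Finset.univ k' (fun l => (1 - sd l) * Tloc m sd ss l k),
    if_pos (Finset.mem_univ k')]
  by_cases hk0 : (k' : ℕ) = 0
  · have hz : ∀ l : Fin m, (if (k' : ℕ) = (l : ℕ) + 1 then
        -(ss l * Tloc m sd ss l k) else 0) = 0 := by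
      intro l
      rw [if_neg (by omega)]
    rw [Finset.sum_congr rfl (fun l _ => hz l), Finset.sum_const_zero, add_zero]
    by_cases hkk : k' = k
    · subst hkk
      rw [hTdiag, Matrix.one_apply_eq]
    · have : (k : ℕ) ≠ 0 := fun h => hkk (Fin.ext (by omega))
      rw [hT0 k' k (by omega), Matrix.one_apply_ne hkk, mul_zero]
  · obtain ⟨c, hc⟩ : ∃ c, (k' : ℕ) = c + 1 := ⟨(k' : ℕ) - 1, by omega⟩
    have hcm : c < m := by have := k'.isLt; omega
    set l₀ : Fin m := ⟨c, hcm⟩ with hl₀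
    have hsum2 : ∑ l : Fin m, (if (k' : ℕ) = (l : ℕ) + 1 then
        -(ss l * Tloc m sd ss l k) else 0) = -(ss l₀ * Tloc m sd ss l₀ k) := by
      rw [Finset.sum_eq_single l₀]
      · rw [if_pos (by simp [hl₀, hc])]
      · intro b _ hb
        rw [if_neg]
        intro h
        exact hb (Fin.ext (by simp [hl₀]; omega))
      · intro h
        exact absurd (Finset.mem_univ l₀) h
    rw [hsum2]
    rcases lt_trichotomy (k : ℕ) (k' : ℕ) with hlt | heq | hgt
    · have hkc : (k : ℕ) ≤ c := by omega
      have hkk : k' ≠ k := fun h => by omega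
      rw [Matrix.one_apply_ne hkk]
      have hssl₀ : ss l₀ = B c := by
        rw [hB]
        simp only [hcm, dif_pos]
        rfl
      have hsd' : (1 - sd k') = A (c + 1) := by
        rw [hA]
        have h1 : c + 1 < m := by have := k'.isLt; omega
        simp only [h1, dif_pos]
        congr 1
        congr 1
        apply Fin.ext
        simpa using hc
      rw [hT k' k, if_pos (by omega), hT l₀ k, if_pos (by simp [hl₀]; omega)]
      simp only [hl₀, hc]
      rw [Finset.prod_Icc_succ_top (by omega : (k : ℕ) ≤ c + 1),
        Finset.prod_Ico_succ_top hkc, hsd', hssl₀]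
      have hQ : (∏ l ∈ Finset.Icc (k : ℕ) c, A l) ≠ 0 :=
        (prodA_pos m sd hsd _).ne'
      have hAc : A (c + 1) ≠ 0 := (hApos _).ne'
      field_simp
      ring
    · have hkk : k' = k := Fin.ext heq.symm
      subst hkk
      rw [hT0 l₀ k' (by simp [hl₀]; omega), mul_zero, neg_zero, add_zero,
        hTdiag, Matrix.one_apply_eq]
    · have hkk : k' ≠ k := fun h => by omega
      rw [Matrix.one_apply_ne hkk, hT0 k' k hgt, hT0 l₀ k (by simp [hl₀]; omega),
        mul_zero, mul_zero, neg_zero, add_zero]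

lemma survMat_blocks (m n : ℕ) (sd ss : Fin m → Fin n → ℝ) :
    survMat m n sd ss =
      Matrix.blockDiagonal (fun i => localS m (fun k => sd k i) (fun k => ss k i)) := by
  ext ⟨k, i⟩ ⟨k', j⟩
  simp only [survMat, Matrix.of_apply, Matrix.blockDiagonal_apply]
  by_cases h : i = j
  · subst h; simp
  · simp [h]

lemma fecMat_blocks (m n : ℕ) (f : Fin m → Fin n → ℝ) :
    fecMat m n f =
      Matrix.blockDiagonal (fun i => localF m (fun k => f k i)) := by
  ext ⟨k, i⟩ ⟨k', j⟩
  simp only [fecMat, Matrix.of_apply, Matrix.blockDiagonal_apply]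
  by_cases h : i = j
  · subst h; simp
  · simp [h]


theorem stmt11
    (m n : ℕ) (hm : 2 ≤ m) (hn : 1 ≤ n)
    (f : Fin m → Fin n → ℝ) (hf : ∀ k i, 0 ≤ f k i)
    (sd ss : Fin m → Fin n → ℝ)
    (hsd : ∀ k i, 0 ≤ sd k i) (hss : ∀ k i, 0 ≤ ss k i)
    (hs1 : ∀ (k : Fin m) (i : Fin n),
      sd k i + (if (k : ℕ) + 1 < m then ss k i else 0) < 1)
    (d : Fin m → Fin n → Fin n → ℝ)
    (hd0 : ∀ k i j, 0 ≤ d k i j) (hd1 : ∀ k i j, d k i j ≤ 1)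
    (hdsum : ∀ k j, ∑ i, d k i j = 1)
    (hDS : dispMat m n d * survMat m n sd ss = survMat m n sd ss) :
    altR0 m n (nextGen m n f sd ss d) =
        (⨆ i : Fin n,
          (localF m (fun k => f k i) *
            (1 - localS m (fun k => sd k i) (fun k => ss k i))⁻¹)
            ⟨0, show 0 < m by omega⟩ ⟨0, show 0 < m by omega⟩) ∧
      ∀ i j : Fin n,
        newbornSub (show 0 < m by omega) (nextGen m n f sd ss d) i j =
          d ⟨0, show 0 < m by omega⟩ i j *
            (localF m (fun k => f k j) *
              (1 - localS m (fun k => sd k j) (fun k => ss k j))⁻¹)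
              ⟨0, show 0 < m by omega⟩ ⟨0, show 0 < m by omega⟩ := by
  have hm' : 0 < m := by omega
  have hsd1 : ∀ (k : Fin m) (i : Fin n), sd k i < 1 := by
    intro k i
    have h := hs1 k i
    have h2 := hss k i
    split_ifs at h with h3
    · linarith
    · linarith
  set z : Fin m := ⟨0, hm'⟩ with hzdef
  set W : Fin n → Matrix (Fin m) (Fin m) ℝ := fun j =>
    localF m (fun k => f k j) * Tloc m (fun k => sd k j) (fun k => ss k j) with hWdef
  set Rv : Fin n → ℝ := fun j => W j z z with hRvdef
  have hTinv : ∀ i : Fin n,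
      (1 - localS m (fun k => sd k i) (fun k => ss k i))⁻¹ =
        Tloc m (fun k => sd k i) (fun k => ss k i) := fun i =>
    Matrix.inv_eq_right_inv (Tloc_rightInv m _ _ (fun k => hsd1 k i))
  have hGinv : (1 - dispMat m n d * survMat m n sd ss)⁻¹ =
      Matrix.blockDiagonal (fun i => Tloc m (fun k => sd k i) (fun k => ss k i)) := by
    rw [hDS]
    apply Matrix.inv_eq_right_inv
    rw [survMat_blocks, show (1 : Matrix (Fin m × Fin n) (Fin m × Fin n) ℝ)
        = Matrix.blockDiagonal (fun _ : Fin n => 1) from Matrix.blockDiagonal_one.symm,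
      ← Matrix.blockDiagonal_sub, ← Matrix.blockDiagonal_mul]
    refine congrArg Matrix.blockDiagonal ?_
    funext i
    simpa using Tloc_rightInv m _ _ (fun k => hsd1 k i)
  have hFG : fecMat m n f *
      Matrix.blockDiagonal (fun i => Tloc m (fun k => sd k i) (fun k => ss k i)) =
      Matrix.blockDiagonal W := by
    rw [fecMat_blocks, ← Matrix.blockDiagonal_mul]
  have hN : ∀ (k : Fin m) (i : Fin n) (k' : Fin m) (j : Fin n),
      nextGen m n f sd ss d (k, i) (k', j) = d k i j * W j k k' := by
    intro k i k' j
    unfold nextGen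
    rw [Matrix.mul_assoc, hGinv, hFG, Matrix.mul_apply, Fintype.sum_prod_type]
    simp only [dispMat, Matrix.of_apply, Matrix.blockDiagonal_apply, ite_mul, zero_mul,
      mul_ite, mul_zero]
    rw [Finset.sum_comm]
    rw [Finset.sum_eq_single j]
    · rw [Finset.sum_eq_single k]
      · rw [if_pos rfl, if_pos rfl]
      · intro b _ hb
        rw [if_pos rfl, if_neg (fun h => hb h.symm)]
      · intro h
        exact absurd (Finset.mem_univ k) h
    · intro b _ hb
      exact Finset.sum_eq_zero fun l _ => if_neg hb
    · intro h
      exact absurd (Finset.mem_univ j) h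
  have hW0 : ∀ (j : Fin n) (l k' : Fin m), (l : ℕ) ≠ 0 → W j l k' = 0 := by
    intro j l k' hl
    rw [hWdef]
    simp only [Matrix.mul_apply, localF, Matrix.of_apply]
    exact Finset.sum_eq_zero fun t _ => by rw [if_neg hl, zero_mul]
  have hWnn : ∀ (j : Fin n) (l k' : Fin m), 0 ≤ W j l k' := by
    intro j l k'
    rw [hWdef]
    simp only [Matrix.mul_apply, localF, Matrix.of_apply]
    refine Finset.sum_nonneg fun t _ => mul_nonneg ?_
      (Tloc_nonneg m _ _ (fun k => hsd1 k j) (fun k => hss k j) t k')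
    split
    · exact hf t j
    · exact le_rfl
  have hterm : ∀ x : Fin m × Fin n → ℝ,
      (∀ p : Fin m × Fin n, (p.1 : ℕ) ≠ 0 → x p = 0) →
      ∀ (k : Fin m) (i : Fin n), (nextGen m n f sd ss d).mulVec x (k, i)
        = ∑ j, d k i j * W j k z * x (z, j) := by
    intro x hxs k i
    simp only [Matrix.mulVec, dotProduct]
    rw [Fintype.sum_prod_type, Finset.sum_eq_single z]
    · exact Finset.sum_congr rfl fun j _ => by rw [hN k i z j]
    · intro b _ hb
      refine Finset.sum_eq_zero fun j _ => ?_
      rw [hxs (b, j) (fun h => hb (Fin.ext h)), mul_zero]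
    · intro h
      exact absurd (Finset.mem_univ z) h
  have hval : ∀ x : Fin m × Fin n → ℝ, (∀ p, 0 ≤ x p) →
      (∀ p : Fin m × Fin n, (p.1 : ℕ) ≠ 0 → x p = 0) →
      ∑ p : Fin m × Fin n, |(nextGen m n f sd ss d).mulVec x p|
        = ∑ j, Rv j * x (z, j) := by
    intro x hx0 hxs
    rw [Fintype.sum_prod_type]
    have h1 : ∀ (k : Fin m) (i : Fin n), |(nextGen m n f sd ss d).mulVec x (k, i)|
        = ∑ j, d k i j * W j k z * x (z, j) := by
      intro k i
      rw [hterm x hxs k i]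
      exact abs_of_nonneg (Finset.sum_nonneg fun j _ =>
        mul_nonneg (mul_nonneg (hd0 k i j) (hWnn j k z)) (hx0 (z, j)))
    calc ∑ k : Fin m, ∑ i : Fin n, |(nextGen m n f sd ss d).mulVec x (k, i)|
        = ∑ k : Fin m, ∑ i : Fin n, ∑ j, d k i j * W j k z * x (z, j) :=
          Finset.sum_congr rfl fun k _ => Finset.sum_congr rfl fun i _ => h1 k i
      _ = ∑ k : Fin m, ∑ j, (∑ i, d k i j) * (W j k z * x (z, j)) := by
          refine Finset.sum_congr rfl fun k _ => ?_
          rw [Finset.sum_comm]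
          refine Finset.sum_congr rfl fun j _ => ?_
          rw [Finset.sum_mul]
          exact Finset.sum_congr rfl fun i _ => by ring
      _ = ∑ k : Fin m, ∑ j, W j k z * x (z, j) := by
          refine Finset.sum_congr rfl fun k _ => Finset.sum_congr rfl fun j _ => ?_
          rw [hdsum k j, one_mul]
      _ = ∑ j, Rv j * x (z, j) := by
          rw [Finset.sum_comm]
          refine Finset.sum_congr rfl fun j _ => ?_
          rw [← Finset.sum_mul]
          congr 1
          rw [Finset.sum_eq_single z]
          · intro b _ hb
            exact hW0 j b z (fun h => hb (Fin.ext h))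
          · intro h
            exact absurd (Finset.mem_univ z) h
  have hxsum : ∀ x : Fin m × Fin n → ℝ, (∀ p, 0 ≤ x p) →
      (∀ p : Fin m × Fin n, (p.1 : ℕ) ≠ 0 → x p = 0) →
      ∑ p : Fin m × Fin n, |x p| = ∑ j, x (z, j) := by
    intro x hx0 hxs
    rw [Fintype.sum_prod_type, Finset.sum_eq_single z]
    · exact Finset.sum_congr rfl fun j _ => abs_of_nonneg (hx0 (z, j))
    · intro b _ hb
      exact Finset.sum_eq_zero fun j _ => by
        rw [hxs (b, j) (fun h => hb (Fin.ext h)), abs_zero]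
    · intro h
      exact absurd (Finset.mem_univ z) h
  haveI : Nonempty (Fin n) := ⟨⟨0, by omega⟩⟩
  obtain ⟨j₀, hj₀⟩ := Finite.exists_max Rv
  set x₀ : Fin m × Fin n → ℝ := fun p => if p = (z, j₀) then 1 else 0 with hx₀def
  have hx₀0 : ∀ p, 0 ≤ x₀ p := by
    intro p
    rw [hx₀def]
    dsimp only
    split
    · norm_num
    · exact le_rfl
  have hx₀s : ∀ p : Fin m × Fin n, (p.1 : ℕ) ≠ 0 → x₀ p = 0 := by
    intro p hp
    rw [hx₀def]
    dsimp only
    rw [if_neg]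
    rintro rfl
    exact hp rfl
  have hcond : ∀ j : Fin n, ((z, j) = ((z : Fin m), j₀)) ↔ j = j₀ := by
    intro j
    simp [Prod.ext_iff]
  have hx₀1 : ∑ p : Fin m × Fin n, |x₀ p| = 1 := by
    rw [hxsum x₀ hx₀0 hx₀s, hx₀def]
    dsimp only
    have h2 : ∀ j : Fin n, (if ((z : Fin m), j) = (z, j₀) then (1:ℝ) else 0)
        = if j = j₀ then 1 else 0 := by
      intro j
      by_cases h : j = j₀
      · rw [if_pos ((hcond j).mpr h), if_pos h]
      · rw [if_neg (fun hh => h ((hcond j).mp hh)), if_neg h]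
    rw [Finset.sum_congr rfl fun j _ => h2 j,
      Finset.sum_ite_eq' Finset.univ j₀ (fun _ => (1:ℝ)), if_pos (Finset.mem_univ j₀)]
  have hx₀val : ∑ p : Fin m × Fin n, |(nextGen m n f sd ss d).mulVec x₀ p| = Rv j₀ := by
    rw [hval x₀ hx₀0 hx₀s]
    have h2 : ∀ j : Fin n, Rv j * x₀ (z, j) = if j = j₀ then Rv j else 0 := by
      intro j
      rw [hx₀def]
      dsimp only
      by_cases h : j = j₀
      · rw [if_pos ((hcond j).mpr h), if_pos h, mul_one]
      · rw [if_neg (fun hh => h ((hcond j).mp hh)), if_neg h, mul_zero]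
    rw [Finset.sum_congr rfl fun j _ => h2 j,
      Finset.sum_ite_eq' Finset.univ j₀ Rv, if_pos (Finset.mem_univ j₀)]
  have hmem : Rv j₀ ∈ {r : ℝ | ∃ x : Fin m × Fin n → ℝ, (∀ p, 0 ≤ x p) ∧
      (∑ p, |x p|) = 1 ∧ (∀ p : Fin m × Fin n, (p.1 : ℕ) ≠ 0 → x p = 0) ∧
      r = ∑ p, |(nextGen m n f sd ss d).mulVec x p|} :=
    ⟨x₀, hx₀0, hx₀1, hx₀s, hx₀val.symm⟩
  have hub : ∀ r ∈ {r : ℝ | ∃ x : Fin m × Fin n → ℝ, (∀ p, 0 ≤ x p) ∧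
      (∑ p, |x p|) = 1 ∧ (∀ p : Fin m × Fin n, (p.1 : ℕ) ≠ 0 → x p = 0) ∧
      r = ∑ p, |(nextGen m n f sd ss d).mulVec x p|}, r ≤ Rv j₀ := by
    rintro r ⟨x, hx0, hx1, hxs, rfl⟩
    rw [hval x hx0 hxs]
    have hsum1 : ∑ j, x (z, j) = 1 := by
      rw [← hxsum x hx0 hxs]
      exact hx1
    calc ∑ j, Rv j * x (z, j) ≤ ∑ j, Rv j₀ * x (z, j) :=
          Finset.sum_le_sum fun j _ => mul_le_mul_of_nonneg_right (hj₀ j) (hx0 (z, j))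
      _ = Rv j₀ := by rw [← Finset.mul_sum, hsum1, mul_one]
  have haltR0 : altR0 m n (nextGen m n f sd ss d) = Rv j₀ := by
    unfold altR0
    exact le_antisymm (csSup_le ⟨_, hmem⟩ hub) (le_csSup ⟨Rv j₀, hub⟩ hmem)
  constructor
  · rw [haltR0]
    have hsup : ∀ i : Fin n, (localF m (fun k => f k i) *
        (1 - localS m (fun k => sd k i) (fun k => ss k i))⁻¹)
          ⟨0, show 0 < m by omega⟩ ⟨0, show 0 < m by omega⟩ = Rv i := by
      intro i
      rw [hTinv i]
    rw [iSup_congr hsup]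
    exact (le_antisymm (ciSup_le hj₀)
      (le_ciSup (Set.Finite.bddAbove (Set.finite_range Rv)) j₀)).symm
  · intro i j
    show nextGen m n f sd ss d (⟨0, _⟩, i) (⟨0, _⟩, j) = _
    rw [hTinv j]
    exact hN ⟨0, hm'⟩ i ⟨0, hm'⟩ j
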